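/- Let the chemical reaction network be strongly endotactic, let P ⊆ {1,…,d} be nonempty with R(P) ≠ ∅, and let w̄ = (w̄^{(1)},…,w̄^{(ℓ′)}) be an ordered orthonormal family of unit vectors supported on P. If a reaction r ∈ R(P) satisfies supp(c_out^r) ⊆ P, ⟨w̄^{(k)}, π_P c^r⟩ = 0 for all k < ℓ′, and ⟨w̄^{(ℓ′)}, π_P c^r⟩ > 0, then r ∉ super_{ℓ′}. -/

import Mathlib

open Real Filter Finset Set MeasureTheory
open scoped Classical

noncomputable section

/-- A chemical reaction network on `d` species with `m` reactions. -/
structure CRN (d m : ℕ) where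
  cin : Fin m → Fin d → ℕ
  cout : Fin m → Fin d → ℕ
  k : Fin m → ℝ
  k_pos : ∀ r, 0 < k r

namespace CRN

variable {d m : ℕ}

/-- The reaction vector `c^r = c_out^r - c_in^r`. -/
def cvec (N : CRN d m) (r : Fin m) : Fin d → ℝ := fun i => (N.cout r i : ℝ) - (N.cin r i : ℝ)

/-- Mass-action rate `λ_r`. -/
def lam (N : CRN d m) (r : Fin m) (x : Fin d → ℝ) : ℝ := N.k r * ∏ i, x i ^ (N.cin r i)

/-- Volume-normalized jump rate `Λ_r^{(v)}`. -/
def jump (N : CRN d m) (v : ℝ) (r : Fin m) (x : Fin d → ℝ) : ℝ :=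
  N.k r / v ^ (∑ i, N.cin r i) * ∏ i, ∏ l ∈ Finset.range (N.cin r i), (v * x i - (l : ℝ))

/-- Reactions whose input complex is `w`-maximal among all input complexes. -/
def Rw (N : CRN d m) (w : Fin d → ℝ) : Set (Fin m) :=
  {r | ∀ r', 0 ≤ ∑ i, w i * ((N.cin r i : ℝ) - (N.cin r' i : ℝ))}

/-- Strongly endotactic network. -/
def StronglyEndotactic (N : CRN d m) : Prop :=
  ∀ w : Fin d → ℝ, w ≠ 0 →
    (∃ r ∈ N.Rw w, ∑ i, w i * N.cvec r i < 0) ∧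
    ∀ r ∈ N.Rw w, ∑ i, w i * N.cvec r i ≤ 0

/-- A siphon. -/
def IsSiphon (N : CRN d m) (P : Finset (Fin d)) : Prop :=
  P.Nonempty ∧ ∀ r, (∃ i ∈ P, 0 < N.cout r i) → ∃ i ∈ P, 0 < N.cin r i

/-- Reactions with substrates only from `P`. -/
def RP (N : CRN d m) (P : Finset (Fin d)) : Set (Fin m) := {r | ∀ i ∉ P, N.cin r i = 0}

/-- Reactions of `R(P)` whose input complex is `w`-maximal within `R(P)`. -/
def RPw (N : CRN d m) (P : Finset (Fin d)) (w : Fin d → ℝ) : Set (Fin m) :=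
  {r | r ∈ N.RP P ∧ ∀ r' ∈ N.RP P, 0 ≤ ∑ i, w i * ((N.cin r i : ℝ) - (N.cin r' i : ℝ))}

/-- The products of reaction `r` lie in `P`. -/
def OutIn (N : CRN d m) (P : Finset (Fin d)) (r : Fin m) : Prop := ∀ i ∉ P, N.cout r i = 0

/-- `w`-dissipative reaction. -/
def Dissipative (N : CRN d m) (P : Finset (Fin d)) (w : Fin d → ℝ) (r : Fin m) : Prop :=
  ¬ N.OutIn P r ∨ ∑ i, w i * N.cvec r i < 0

/-- `w`-explosive reaction. -/
def Explosive (N : CRN d m) (P : Finset (Fin d)) (w : Fin d → ℝ) (r : Fin m) : Prop :=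
  N.OutIn P r ∧ 0 < ∑ i, w i * N.cvec r i

end CRN

/-- Chemical Lyapunov function `U(x) = d + 1 + ∑ x_i (log x_i - 1)`. -/
def U (n : ℕ) (x : Fin n → ℝ) : ℝ := n + 1 + ∑ i, x i * (Real.log (x i) - 1)

/-- Euclidean inner product. -/
def dot {n : ℕ} (a b : Fin n → ℝ) : ℝ := ∑ i, a i * b i

namespace CRN

variable {d m : ℕ}

/-- `h_r^{(v)}(x) = ⟨∇_r^{(v)} U(x), c^r⟩`. -/
def hrv (N : CRN d m) (P : Finset (Fin d)) (v : ℝ) (r : Fin m) (x : Fin d → ℝ) : ℝ :=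
  ∑ i, (if i ∈ P then Real.log (x i)
        else if N.cout r i ≠ 0 then Real.log (N.cvec r i / v) else 0) * N.cvec r i

/-- `Q_r^{(v)}(x) = (U(x + v⁻¹ c^r)/U(x))^v`. -/
def Qrv (N : CRN d m) (v : ℝ) (r : Fin m) (x : Fin d → ℝ) : ℝ :=
  (U d (fun i => x i + N.cvec r i / v) / U d x) ^ v

/-- `L_r^{(v)}(x) = U(x) (Q_r^{(v)}(x) - 1)`. -/
def Lrv (N : CRN d m) (v : ℝ) (r : Fin m) (x : Fin d → ℝ) : ℝ :=
  U d x * (N.Qrv v r x - 1)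

/-- The modified network `C_{u,P}`: outputs of reactions not in `R(P)_u` are restricted to `P`. -/
def modify (N : CRN d m) (P : Finset (Fin d)) (u : Fin d → ℝ) : CRN d m where
  cin := N.cin
  cout := fun r i => if i ∈ P ∨ r ∈ N.RPw P u then N.cout r i else 0
  k := N.k
  k_pos := N.k_pos

/-- The nested sets `super_k` of a frame. -/
def superN (N : CRN d m) (P : Finset (Fin d)) {L : ℕ} (wbar : Fin L → Fin d → ℝ) : ℕ → Set (Fin m)
  | 0 => N.RP P
  | (k+1) =>
    if h : k < L then
      {r | r ∈ N.superN P wbar k ∧ ∀ r' ∈ N.superN P wbar k,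
        0 ≤ ∑ i, wbar ⟨k, h⟩ i * ((N.cin r i : ℝ) - (N.cin r' i : ℝ))}
    else N.superN P wbar k

/-- Species reachable in `k` steps starting from reactions with no inputs. -/
def reachSet (N : CRN d m) : ℕ → Set (Fin d)
  | 0 => ∅
  | (k+1) => N.reachSet k ∪
      {i | ∃ r, 0 < N.cout r i ∧ ∀ l, 0 < N.cin r l → l ∈ N.reachSet k}

/-- The Lagrangian `L(λ, ξ)`. -/
def Lagr (N : CRN d m) (lamv : Fin m → ℝ) (ξ : Fin d → ℝ) : ℝ :=
  ⨆ θ : Fin d → ℝ, ((∑ i, θ i * ξ i) - ∑ r, lamv r * (Real.exp (∑ i, θ i * N.cvec r i) - 1))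

end CRN

/-- A frame: an ordered orthonormal family supported on `P`. -/
structure Frame (d : ℕ) (P : Finset (Fin d)) (dstar : ℕ) where
  w : Fin dstar → Fin d → ℝ
  ortho : ∀ k l, dot (w k) (w l) = if k = l then 1 else 0
  suppP : ∀ k, ∀ i ∉ P, w k i = 0

/-- A `(v',P)`-divergent volume-jet framed by `F` and adapted to the network `N`. -/
structure VolJet {d m : ℕ} (N : CRN d m) (P : Finset (Fin d)) {dstar : ℕ}
    (F : Frame d P dstar) (v' : ℝ → ℝ) where
  v : ℕ → ℝ
  θ : ℕ → ℝ
  w : ℕ → Fin d → ℝ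
  θ_gt : ∀ j, 1 < θ j
  θ_top : Tendsto θ atTop atTop
  conic : ∀ j, ∃ a : Fin dstar → ℝ, (∀ k, 0 ≤ a k) ∧ ∀ i, w j i = ∑ k, a k * F.w k i
  unit : ∀ j, dot (w j) (w j) = 1
  beta_ratio : ∀ (k : ℕ) (hk : k + 1 < dstar),
    Tendsto (fun j => dot (w j) (F.w ⟨k + 1, hk⟩) / dot (w j) (F.w ⟨k, Nat.lt_of_succ_lt hk⟩))
      atTop (nhds 0)
  adapted_sign : ∀ r ∈ N.RP P, N.OutIn P r →
    (∀ j, dot (w j) (N.cvec r) < 0) ∨ (∀ j, dot (w j) (N.cvec r) = 0) ∨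
      (∀ j, 0 < dot (w j) (N.cvec r))
  adapted_theta : ∀ k : Fin dstar,
    (∃ L : ℝ, Tendsto (fun j => θ j ^ dot (w j) (F.w k)) atTop (nhds L)) ∨
      Tendsto (fun j => θ j ^ dot (w j) (F.w k)) atTop atTop
  vx_nat : ∀ j, ∀ i ∈ P, ∃ n : ℕ, 0 < n ∧ v j * θ j ^ (w j i) = n
  v_big : ∀ j, v' (∑ i ∈ P, θ j ^ (w j i)) < v j
  x_div : Tendsto (fun j => ∑ i ∈ P, θ j ^ (w j i)) atTop atTop

/-- The spatial trajectory of a volume-jet. -/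
def VolJet.x {d m : ℕ} {N : CRN d m} {P : Finset (Fin d)} {dstar : ℕ} {F : Frame d P dstar}
    {v' : ℝ → ℝ} (J : VolJet N P F v') (j : ℕ) : Fin d → ℝ :=
  fun i => if i ∈ P then J.θ j ^ (J.w j i) else 0

/-- Reachability sets for a polynomial system. -/
def polyReach (d : ℕ) (Q : Fin d → MvPolynomial (Fin d) ℝ) : ℕ → Set (Fin d)
  | 0 => ∅
  | (k+1) => polyReach d Q k ∪
      {i | ∃ s : Fin d →₀ ℕ, 0 < MvPolynomial.coeff s (Q i) ∧ ∀ l, s l ≠ 0 → l ∈ polyReach d Q k}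

theorem stmt10 {d m : ℕ} (ℓ' : ℕ) (hl : 0 < ℓ') (N : CRN d m)
    (hend : N.StronglyEndotactic)
    (P : Finset (Fin d)) (hP : P.Nonempty) (hRP : (N.RP P).Nonempty)
    (wbar : Fin ℓ' → Fin d → ℝ)
    (hortho : ∀ k l, dot (wbar k) (wbar l) = if k = l then 1 else 0)
    (hsupp : ∀ k, ∀ i ∉ P, wbar k i = 0)
    (r : Fin m) (hr : r ∈ N.RP P) (hout : N.OutIn P r)
    (hzero : ∀ k : Fin ℓ', (k : ℕ) < ℓ' - 1 → dot (wbar k) (N.cvec r) = 0)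
    (hpos : 0 < dot (wbar ⟨ℓ' - 1, by omega⟩) (N.cvec r)) :
    r ∉ N.superN P wbar ℓ' := by
  intro hmem
  have hm : (Finset.univ : Finset (Fin m)).Nonempty := ⟨r, Finset.mem_univ r⟩
  -- splitting of sums
  have hsplit : ∀ (w a b c : Fin d → ℝ),
      (∑ i, w i * (a i - c i)) = (∑ i, w i * (a i - b i)) + (∑ i, w i * (b i - c i)) := by
    intro w a b c
    rw [← Finset.sum_add_distrib]
    exact Finset.sum_congr rfl fun i _ => by ring
  -- monotonicity of superN
  have hstep : ∀ n : ℕ, N.superN P wbar (n + 1) ⊆ N.superN P wbar n := by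
    intro n s hs
    by_cases h : n < ℓ'
    · rw [CRN.superN, dif_pos h] at hs; exact hs.1
    · rw [CRN.superN, dif_neg h] at hs; exact hs
  have hmono : ∀ a b : ℕ, a ≤ b → N.superN P wbar b ⊆ N.superN P wbar a := by
    intro a b hab
    induction b with
    | zero => have : a = 0 := Nat.le_zero.mp hab; subst this; exact Set.Subset.refl _
    | succ n ih =>
      rcases Nat.lt_or_ge a (n + 1) with h | h
      · exact Set.Subset.trans (hstep n) (ih (by omega))
      · have : a = n + 1 := by omega
        subst this; exact Set.Subset.refl _
  have hmem0 : r ∈ N.RP P := hr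
  -- Lemma A: membership from equalities
  have hA : ∀ j : ℕ, ∀ hj : j ≤ ℓ', ∀ r', r' ∈ N.RP P →
      (∀ j' : ℕ, ∀ hj' : j' < j,
        ∑ i, wbar ⟨j', by omega⟩ i * ((N.cin r i : ℝ) - (N.cin r' i : ℝ)) = 0) →
      r' ∈ N.superN P wbar j := by
    intro j
    induction j with
    | zero => intro _ r' hr' _; simpa [CRN.superN] using hr'
    | succ n ih =>
      intro hn r' hr' heq
      have hnl : n < ℓ' := hn
      have hr'' : r' ∈ N.superN P wbar n :=
        ih (by omega) r' hr' (fun j' hj' => heq j' (by omega))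
      have hrn1 : r ∈ N.superN P wbar (n + 1) := hmono (n + 1) ℓ' hn hmem
      rw [CRN.superN, dif_pos hnl] at hrn1 ⊢
      obtain ⟨hrn, hrmax⟩ := hrn1
      refine ⟨hr'', fun r'' hr''' => ?_⟩
      have h1 := hrmax r'' hr'''
      have h2 := heq n (by omega)
      have h3 := hsplit (wbar ⟨n, hnl⟩) (fun i => (N.cin r' i : ℝ)) (fun i => (N.cin r i : ℝ))
        (fun i => (N.cin r'' i : ℝ))
      have h4 : (∑ i, wbar ⟨n, hnl⟩ i * ((N.cin r' i : ℝ) - (N.cin r i : ℝ))) = 0 := by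
        rw [← neg_eq_zero, ← Finset.sum_neg_distrib]
        rw [← h2]
        exact Finset.sum_congr rfl fun i _ => by ring
      linarith [h3]
  -- the lexicographic induction
  have hC : ∀ k : ℕ, k ≤ ℓ' → ∃ δ : Fin ℓ' → ℝ,
      (∀ j : Fin ℓ', (j : ℕ) < k → 0 < δ j) ∧ (∀ j : Fin ℓ', k ≤ (j : ℕ) → δ j = 0) ∧
      ∀ r', r' ∈ N.RP P →
        (∀ j : Fin ℓ', (j : ℕ) < k →
          ∑ i, wbar j i * ((N.cin r i : ℝ) - (N.cin r' i : ℝ)) = 0) ∨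
        0 < ∑ i, (∑ j, δ j * wbar j i) * ((N.cin r i : ℝ) - (N.cin r' i : ℝ)) := by
    intro k
    induction k with
    | zero =>
      intro _
      refine ⟨fun _ => 0, fun j hj => by omega, fun _ _ => rfl, fun r' _ => Or.inl ?_⟩
      intro j hj; omega
    | succ k ih =>
      intro hk1
      obtain ⟨δ, hδpos, hδzero, hδprop⟩ := ih (by omega)
      have hkl : k < ℓ' := hk1
      set wk : Fin d → ℝ := wbar ⟨k, hkl⟩ with hwk
      set w : Fin d → ℝ := fun i => ∑ j, δ j * wbar j i with hw
      set A : Fin m → ℝ := fun r' => ∑ i, w i * ((N.cin r i : ℝ) - (N.cin r' i : ℝ)) with hA'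
      set B : Fin m → ℝ := fun r' => ∑ i, wk i * ((N.cin r i : ℝ) - (N.cin r' i : ℝ)) with hB
      set g : Fin m → ℝ := fun r' =>
        if h : 0 < A r' ∧ B r' < 0 then A r' / (2 * (-B r')) else 1 with hg
      set ε : ℝ := Finset.univ.inf' hm g with hε
      have hgpos : ∀ r', 0 < g r' := by
        intro r'
        by_cases h : 0 < A r' ∧ B r' < 0
        · simp only [hg, dif_pos h]
          exact div_pos h.1 (by linarith [h.2])
        · simp only [hg, dif_neg h]; norm_num
      have hεpos : 0 < ε := by
        rw [hε, Finset.lt_inf'_iff]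
        exact fun r' _ => hgpos r'
      have hεle : ∀ r', ε ≤ g r' := fun r' => Finset.inf'_le g (Finset.mem_univ r')
      -- new coefficients
      set δ' : Fin ℓ' → ℝ := fun j => if (j : ℕ) = k then ε else δ j with hδ'
      have hδ'k : δ' ⟨k, hkl⟩ = ε := by simp [hδ']
      have hδ'ne : ∀ j : Fin ℓ', j ≠ ⟨k, hkl⟩ → δ' j = δ j := by
        intro j hj
        have : (j : ℕ) ≠ k := fun h => hj (Fin.ext h)
        simp [hδ', this]
      have hδk0 : δ ⟨k, hkl⟩ = 0 := hδzero _ (le_refl k)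
      set w' : Fin d → ℝ := fun i => ∑ j, δ' j * wbar j i with hw'
      have hw'eq : ∀ i, w' i = w i + ε * wk i := by
        intro i
        have : w' i - w i = ∑ j, (δ' j - δ j) * wbar j i := by
          rw [hw', hw, ← Finset.sum_sub_distrib]
          exact Finset.sum_congr rfl fun j _ => by ring
        have h2 : (∑ j, (δ' j - δ j) * wbar j i) = ε * wk i := by
          rw [Finset.sum_eq_single (⟨k, hkl⟩ : Fin ℓ')]
          · rw [hδ'k, hδk0]; ring_nf; rfl
          · intro j _ hj
            rw [hδ'ne j hj]; ring
          · intro h; exact absurd (Finset.mem_univ _) h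
        linarith [this, h2]
      refine ⟨δ', ?_, ?_, ?_⟩
      · intro j hj
        rcases Nat.lt_or_ge (j : ℕ) k with h | h
        · have : (j : ℕ) ≠ k := by omega
          simp only [hδ', if_neg this]
          exact hδpos j h
        · have : (j : ℕ) = k := by omega
          simp only [hδ', if_pos this]
          exact hεpos
      · intro j hj
        have h1 : (j : ℕ) ≠ k := by omega
        simp only [hδ', if_neg h1]
        exact hδzero j (by omega)
      · intro r' hr'
        have hAw' : (∑ i, (∑ j, δ' j * wbar j i) * ((N.cin r i : ℝ) - (N.cin r' i : ℝ)))
            = A r' + ε * B r' := by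
          have : ∀ i, (∑ j, δ' j * wbar j i) = w i + ε * wk i := hw'eq
          calc (∑ i, (∑ j, δ' j * wbar j i) * ((N.cin r i : ℝ) - (N.cin r' i : ℝ)))
              = ∑ i, (w i * ((N.cin r i : ℝ) - (N.cin r' i : ℝ))
                  + ε * (wk i * ((N.cin r i : ℝ) - (N.cin r' i : ℝ)))) := by
                refine Finset.sum_congr rfl fun i _ => ?_
                rw [this i]; ring
            _ = A r' + ε * B r' := by
                rw [Finset.sum_add_distrib, ← Finset.mul_sum]
        rcases hδprop r' hr' with heq | hApos
        · -- equalities up to k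
          have hA0 : A r' = 0 := by
            simp only [hA', hw]
            have : ∀ i, (∑ j, δ j * wbar j i) * ((N.cin r i : ℝ) - (N.cin r' i : ℝ))
                = ∑ j, δ j * (wbar j i * ((N.cin r i : ℝ) - (N.cin r' i : ℝ))) := by
              intro i; rw [Finset.sum_mul]; exact Finset.sum_congr rfl fun j _ => by ring
            rw [Finset.sum_congr rfl fun i _ => this i, Finset.sum_comm]
            refine Finset.sum_eq_zero fun j _ => ?_
            rcases Nat.lt_or_ge (j : ℕ) k with h | h
            · rw [← Finset.mul_sum, heq j h, mul_zero]
            · rw [← Finset.mul_sum, hδzero j h, zero_mul]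
          have hr'super : r' ∈ N.superN P wbar k := by
            refine hA k (by omega) r' hr' fun j' hj' => ?_
            exact heq ⟨j', by omega⟩ hj'
          have hrk1 : r ∈ N.superN P wbar (k + 1) := hmono (k + 1) ℓ' hk1 hmem
          rw [CRN.superN, dif_pos hkl] at hrk1
          have hBnn : 0 ≤ B r' := hrk1.2 r' hr'super
          rcases eq_or_lt_of_le hBnn with hB0 | hBpos
          · refine Or.inl fun j hj => ?_
            rcases Nat.lt_or_ge (j : ℕ) k with h | h
            · exact heq j h
            · have hjk : (j : ℕ) = k := by omega
              have : j = ⟨k, hkl⟩ := Fin.ext hjk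
              rw [this]; exact hB0.symm
          · refine Or.inr ?_
            rw [hAw', hA0]
            have := mul_pos hεpos hBpos
            linarith
        · refine Or.inr ?_
          rw [hAw']
          rcases le_or_gt 0 (B r') with hBnn | hBneg
          · have : 0 ≤ ε * B r' := mul_nonneg (le_of_lt hεpos) hBnn
            linarith
          · have hle := hεle r'
            have hApos' : 0 < A r' := hApos
            have hgval : g r' = A r' / (2 * (-B r')) := by
              simp only [hg]
              rw [dif_pos (⟨hApos', hBneg⟩ : 0 < A r' ∧ B r' < 0)]
            rw [hgval] at hle
            have h2B : 0 < 2 * (-B r') := by linarith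
            have h2 : ε * (2 * (-B r')) ≤ A r' := (le_div_iff₀ h2B).mp hle
            nlinarith [mul_pos hεpos (show 0 < -B r' by linarith)]
  -- assemble
  obtain ⟨δ, hδpos, _, hδprop⟩ := hC ℓ' (le_refl ℓ')
  set w : Fin d → ℝ := fun i => ∑ j, δ j * wbar j i with hw
  -- w vanishes off P
  have hwsupp : ∀ i ∉ P, w i = 0 := by
    intro i hi
    simp only [hw]
    exact Finset.sum_eq_zero fun j _ => by rw [hsupp j i hi, mul_zero]
  -- key nonnegativity over R(P)
  have hkey : ∀ r' ∈ N.RP P, 0 ≤ ∑ i, w i * ((N.cin r i : ℝ) - (N.cin r' i : ℝ)) := by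
    intro r' hr'
    rcases hδprop r' hr' with heq | hpos'
    · have : (∑ i, w i * ((N.cin r i : ℝ) - (N.cin r' i : ℝ))) = 0 := by
        rw [hw]
        have h1 : ∀ i, (∑ j, δ j * wbar j i) * ((N.cin r i : ℝ) - (N.cin r' i : ℝ))
            = ∑ j, δ j * (wbar j i * ((N.cin r i : ℝ) - (N.cin r' i : ℝ))) := by
          intro i; rw [Finset.sum_mul]; exact Finset.sum_congr rfl fun j _ => by ring
        rw [Finset.sum_congr rfl fun i _ => h1 i, Finset.sum_comm]
        refine Finset.sum_eq_zero fun j _ => ?_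
        rw [← Finset.mul_sum, heq j j.isLt, mul_zero]
      linarith
    · exact le_of_lt hpos'
  -- cvec r vanishes off P
  have hcvec0 : ∀ i ∉ P, N.cvec r i = 0 := by
    intro i hi
    simp [CRN.cvec, hr i hi, hout i hi]
  -- positivity of ⟨w, cvec r⟩
  have hwc : 0 < ∑ i, w i * N.cvec r i := by
    have h1 : (∑ i, w i * N.cvec r i) = ∑ j, δ j * dot (wbar j) (N.cvec r) := by
      rw [hw]
      have h2 : ∀ i, (∑ j, δ j * wbar j i) * N.cvec r i
          = ∑ j, δ j * (wbar j i * N.cvec r i) := by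
        intro i; rw [Finset.sum_mul]; exact Finset.sum_congr rfl fun j _ => by ring
      rw [Finset.sum_congr rfl fun i _ => h2 i, Finset.sum_comm]
      exact Finset.sum_congr rfl fun j _ => by rw [← Finset.mul_sum]; rfl
    rw [h1]
    rw [Finset.sum_eq_single (⟨ℓ' - 1, by omega⟩ : Fin ℓ')]
    · exact mul_pos (hδpos _ (by omega)) hpos
    · intro j _ hj
      have : (j : ℕ) < ℓ' - 1 := by
        have h3 : (j : ℕ) ≠ ℓ' - 1 := fun h => hj (Fin.ext h)
        have := j.isLt; omega
      rw [hzero j this, mul_zero]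
    · intro h; exact absurd (Finset.mem_univ _) h
  -- big constant M
  set M : ℝ := max 0 (Finset.univ.sup' hm
    (fun r' => ∑ i, w i * ((N.cin r' i : ℝ) - (N.cin r i : ℝ)))) with hM
  have hM0 : 0 ≤ M := le_max_left _ _
  have hMge : ∀ r', ∑ i, w i * ((N.cin r' i : ℝ) - (N.cin r i : ℝ)) ≤ M := by
    intro r'
    refine le_trans ?_ (le_max_right _ _)
    apply Finset.le_sup' (fun r' => ∑ i, w i * ((N.cin r' i : ℝ) - (N.cin r i : ℝ)))
    exact Finset.mem_univ r'
  set u : Fin d → ℝ := fun i => if i ∈ P then w i else -M with hu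
  -- compute ⟨u, cvec r⟩
  have huc : (∑ i, u i * N.cvec r i) = ∑ i, w i * N.cvec r i := by
    refine Finset.sum_congr rfl fun i _ => ?_
    by_cases hi : i ∈ P
    · simp [hu, hi]
    · rw [hcvec0 i hi, mul_zero, mul_zero]
  have hucpos : 0 < ∑ i, u i * N.cvec r i := by rw [huc]; exact hwc
  have hune : u ≠ 0 := by
    intro h
    rw [h] at hucpos
    simp at hucpos
  -- r is u-maximal
  have hrRw : r ∈ N.Rw u := by
    intro r'
    by_cases hr' : r' ∈ N.RP P
    · have h1 := hkey r' hr'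
      have h2 : (∑ i, u i * ((N.cin r i : ℝ) - (N.cin r' i : ℝ)))
          = ∑ i, w i * ((N.cin r i : ℝ) - (N.cin r' i : ℝ)) := by
        refine Finset.sum_congr rfl fun i _ => ?_
        by_cases hi : i ∈ P
        · simp [hu, hi]
        · rw [hr i hi, hr' i hi]
          simp
      rw [h2]; exact h1
    · -- some input outside P
      simp only [CRN.RP, Set.mem_setOf_eq, not_forall] at hr'
      obtain ⟨i0, hi0P, hi0⟩ := hr'
      have hS : (1 : ℝ) ≤ ∑ i, (if i ∈ P then (0:ℝ) else 1) * (N.cin r' i : ℝ) := by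
        have hterm : ∀ i ∈ Finset.univ,
            (0:ℝ) ≤ (if i ∈ P then (0:ℝ) else 1) * (N.cin r' i : ℝ) := by
          intro i _
          by_cases hi : i ∈ P
          · simp [hi]
          · simp [hi]
        have h1 : (1 : ℝ) ≤ (if i0 ∈ P then (0:ℝ) else 1) * (N.cin r' i0 : ℝ) := by
          rw [if_neg hi0P, one_mul]
          exact_mod_cast Nat.one_le_iff_ne_zero.mpr hi0
        exact le_trans h1 (Finset.single_le_sum hterm (Finset.mem_univ i0))
      have hcalc : (∑ i, u i * ((N.cin r i : ℝ) - (N.cin r' i : ℝ)))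
          = (∑ i, w i * ((N.cin r i : ℝ) - (N.cin r' i : ℝ)))
            + M * ∑ i, (if i ∈ P then (0:ℝ) else 1) * (N.cin r' i : ℝ) := by
        rw [Finset.mul_sum, ← Finset.sum_add_distrib]
        refine Finset.sum_congr rfl fun i _ => ?_
        by_cases hi : i ∈ P
        · simp [hu, hi]
        · simp only [hu, if_neg hi, hwsupp i hi, hr i hi]
          push_cast
          ring
      rw [hcalc]
      have h2 := hMge r'
      have h3 : (∑ i, w i * ((N.cin r i : ℝ) - (N.cin r' i : ℝ)))
          = -(∑ i, w i * ((N.cin r' i : ℝ) - (N.cin r i : ℝ))) := by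
        rw [← Finset.sum_neg_distrib]
        exact Finset.sum_congr rfl fun i _ => by ring
      nlinarith [mul_le_mul_of_nonneg_left hS hM0]
  -- contradiction with strong endotacticity
  have := (hend u hune).2 r hrRw
  linarith

end
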